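/- For the two-qubit Werner state ρ_w = ((1−η)/4)·I⊗I + η|ψ₃⟩⟨ψ₃| and the CHSH-type operator S = σ_z⊗Y − σ_z⊗Y' + σ_x⊗Y + σ_x⊗Y' with Y = sinθ·σ_x + cosθ·σ_z, Y' = cosθ·σ_x − sinθ·σ_z, the third cumulant satisfies κ₃(S) = −8η(cosθ + sinθ)[−1 − 3η + 2η²(cosθ + sinθ)²], where κ₃(S) = Tr(ρ_w S³) − 3Tr(ρ_w S²)Tr(ρ_w S) + 2(Tr(ρ_w S))³. -/
import Mathlib
set_option maxHeartbeats 2000000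


open Matrix Kronecker

/-- Third cumulant of the CHSH-type operator `S` in the two-qubit Werner state:
`κ₃(S) = −8η(cosθ+sinθ)[−1 − 3η + 2η²(cosθ+sinθ)²]`. -/
theorem stmt_17 (η θ : ℝ) (hη : η ∈ Set.Icc (-(1 / 3) : ℝ) 1)
    (ψ₃ : Fin 2 × Fin 2 → ℂ)
    (hψ₃ : ψ₃ = fun p => if p = ((0 : Fin 2), (1 : Fin 2)) then ((1 / Real.sqrt 2 : ℝ) : ℂ)
      else if p = ((1 : Fin 2), (0 : Fin 2)) then (-(1 / Real.sqrt 2 : ℝ) : ℂ) else 0)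
    (σx σz : Matrix (Fin 2) (Fin 2) ℂ)
    (hσx : σx = !![0, 1; 1, 0]) (hσz : σz = !![1, 0; 0, -1])
    (Ym Ym' : Matrix (Fin 2) (Fin 2) ℂ)
    (hYm : Ym = ((Real.sin θ : ℝ) : ℂ) • σx + ((Real.cos θ : ℝ) : ℂ) • σz)
    (hYm' : Ym' = ((Real.cos θ : ℝ) : ℂ) • σx - ((Real.sin θ : ℝ) : ℂ) • σz)
    (S : Matrix (Fin 2 × Fin 2) (Fin 2 × Fin 2) ℂ)
    (hS : S = σz ⊗ₖ Ym - σz ⊗ₖ Ym' + σx ⊗ₖ Ym + σx ⊗ₖ Ym')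
    (ρw : Matrix (Fin 2 × Fin 2) (Fin 2 × Fin 2) ℂ)
    (hρw : ρw = (((1 - η) / 4 : ℝ) : ℂ) • (1 : Matrix (Fin 2 × Fin 2) (Fin 2 × Fin 2) ℂ) +
      ((η : ℝ) : ℂ) • vecMulVec ψ₃ (star ψ₃)) :
    (ρw * (S * S * S)).trace - 3 * (ρw * (S * S)).trace * (ρw * S).trace +
        2 * ((ρw * S).trace) ^ 3 =
      ((-8 * η * (Real.cos θ + Real.sin θ) *
        (-1 - 3 * η + 2 * η ^ 2 * (Real.cos θ + Real.sin θ) ^ 2) : ℝ) : ℂ) := by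
  subst hψ₃ hσx hσz hYm hYm' hS hρw
  set u : ℂ := (((1 / Real.sqrt 2 : ℝ)) : ℂ) with hu
  have hstar : (starRingEnd ℂ) u = u := by
    rw [hu]; exact Complex.conj_ofReal _
  have huu : u * (starRingEnd ℂ) u = 1 / 2 := by
    rw [hstar, hu, ← Complex.ofReal_mul, div_mul_div_comm,
      Real.mul_self_sqrt (by norm_num : (0:ℝ) ≤ 2)]
    norm_num
  have hsc2 : Complex.sin (θ : ℂ) ^ 2 + Complex.cos (θ : ℂ) ^ 2 = 1 :=
    Complex.sin_sq_add_cos_sq θ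
  simp only [Matrix.trace, Matrix.diag, Matrix.mul_apply, Fintype.sum_prod_type,
    Fin.sum_univ_two, Matrix.add_apply, Matrix.sub_apply, Matrix.smul_apply,
    Matrix.kroneckerMap_apply, Matrix.one_apply, Matrix.vecMulVec_apply,
    Matrix.cons_val', Matrix.cons_val_zero, Matrix.cons_val_one, Matrix.head_cons,
    Matrix.empty_val', Matrix.cons_val_fin_one, Matrix.head_fin_const,
    Pi.star_apply, smul_eq_mul]
  norm_num [Prod.ext_iff]
  simp only [huu]
  push_cast
  linear_combination ((8 * (η:ℂ) + 24 * (η:ℂ)^2) *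
    (Complex.sin (θ:ℂ) + Complex.cos (θ:ℂ))) * hsc2
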